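/- In a monomial model, suppose |A_{y,S_j}| ≤ 1 for all y ∈ Y^{≠}_{S_j}, and suppose that for every index i ∈ S_j there exists an atom y with A_{y,i} = 1 and A_{y,k} = 0 for all other k ∈ S_j. Then for any θ̃_i-covariation scheme σ acting on S_j, the CD distance equals D_CD(σ(P),P) = log max_{i∈S_j} θ̃_i/θ_i − log min_{i∈S_j} θ̃_i/θ_i, i.e., it coincides with the CD distance between the single probability vectors θ̃_{S_j} and θ_{S_j}. -/

import Mathlib

open Finset

/-- If every atom has total `S_j`-exponent at most one and every index of `S_j` is
realized as the sole `S_j`-exponent of some atom, then the CD distance between the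
varied and original distributions equals the CD distance between the probability
vectors `θ̃_{S_j}` and `θ_{S_j}`. -/
theorem stmt_7 {Y : Type*} [Fintype Y] [Nonempty Y] {k : ℕ}
    (A : Y → Fin k → ℕ) (θ θ' : Fin k → ℝ) (Sj : Finset (Fin k))
    (hSj : Sj.Nonempty)
    (hθpos : ∀ i, 0 < θ i) (hθ'pos : ∀ i, 0 < θ' i)
    (hsum : ∑ i ∈ Sj, θ i = 1) (hsum' : ∑ i ∈ Sj, θ' i = 1)
    (hfix : ∀ i ∉ Sj, θ' i = θ i)
    (hA1 : ∀ y : Y, (∃ i ∈ Sj, A y i ≠ 0) → ∑ j ∈ Sj, A y j ≤ 1)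
    (hreal : ∀ i ∈ Sj, ∃ y : Y, A y i = 1 ∧ ∀ j ∈ Sj, j ≠ i → A y j = 0) :
    Real.log (Finset.univ.sup' Finset.univ_nonempty
        (fun y => (∏ i, θ' i ^ A y i) / ∏ i, θ i ^ A y i))
      - Real.log (Finset.univ.inf' Finset.univ_nonempty
        (fun y => (∏ i, θ' i ^ A y i) / ∏ i, θ i ^ A y i))
    = Real.log (Sj.sup' hSj (fun i => θ' i / θ i))
      - Real.log (Sj.inf' hSj (fun i => θ' i / θ i)) := by
  set g : Fin k → ℝ := fun i => θ' i / θ i with hg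
  -- rewrite the ratio as a product over Sj
  have hfy : ∀ y : Y, (∏ i, θ' i ^ A y i) / ∏ i, θ i ^ A y i
      = ∏ i ∈ Sj, g i ^ A y i := by
    intro y
    rw [← Finset.prod_div_distrib]
    simp_rw [← div_pow]
    refine (Finset.prod_subset (Finset.subset_univ Sj) ?_).symm
    intro i _ hi
    simp [hg, hfix i hi, div_self (hθpos i).ne']
  -- each atom ratio is either 1 or some g i
  have hcases : ∀ y : Y, (∏ i ∈ Sj, g i ^ A y i = 1) ∨
      ∃ i ∈ Sj, ∏ j ∈ Sj, g j ^ A y j = g i := by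
    intro y
    by_cases h : ∃ i ∈ Sj, A y i ≠ 0
    · right
      obtain ⟨i0, hi0, hne⟩ := h
      have hs := hA1 y ⟨i0, hi0, hne⟩
      have hle : A y i0 ≤ ∑ j ∈ Sj, A y j := Finset.single_le_sum (fun _ _ => Nat.zero_le _) hi0
      have hAi0 : A y i0 = 1 := by omega
      refine ⟨i0, hi0, ?_⟩
      rw [Finset.prod_eq_single_of_mem i0 hi0, hAi0, pow_one]
      intro j hj hjne
      have : A y j = 0 := by
        have := Finset.add_sum_erase Sj (A y) hi0
        have hle2 : A y j ≤ ∑ l ∈ Sj.erase i0, A y l :=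
          Finset.single_le_sum (fun _ _ => Nat.zero_le _) (Finset.mem_erase.mpr ⟨hjne, hj⟩)
        omega
      simp [this]
    · left
      push_neg at h
      apply Finset.prod_eq_one
      intro j hj
      simp [h j hj]
  -- there are indices with g i ≥ 1 and g i ≤ 1
  have hone_le : ∃ i ∈ Sj, 1 ≤ g i := by
    by_contra h
    push_neg at h
    have : ∑ i ∈ Sj, θ' i < ∑ i ∈ Sj, θ i := by
      refine Finset.sum_lt_sum_of_nonempty hSj ?_
      intro i hi
      exact (div_lt_one (hθpos i)).mp (h i hi)
    linarith
  have hle_one : ∃ i ∈ Sj, g i ≤ 1 := by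
    by_contra h
    push_neg at h
    have : ∑ i ∈ Sj, θ i < ∑ i ∈ Sj, θ' i := by
      refine Finset.sum_lt_sum_of_nonempty hSj ?_
      intro i hi
      exact (one_lt_div (hθpos i)).mp (h i hi)
    linarith
  -- realization: each g i is an atom ratio
  have hrealize : ∀ i ∈ Sj, ∃ y : Y, ∏ j ∈ Sj, g j ^ A y j = g i := by
    intro i hi
    obtain ⟨y, hy1, hy0⟩ := hreal i hi
    refine ⟨y, ?_⟩
    rw [Finset.prod_eq_single_of_mem i hi, hy1, pow_one]
    intro j hj hjne
    simp [hy0 j hj hjne]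
  have hsup : Finset.univ.sup' Finset.univ_nonempty
      (fun y => (∏ i, θ' i ^ A y i) / ∏ i, θ i ^ A y i)
      = Sj.sup' hSj g := by
    apply le_antisymm
    · apply Finset.sup'_le
      intro y _
      rw [hfy y]
      rcases hcases y with h1 | ⟨i, hi, hval⟩
      · rw [h1]
        obtain ⟨i, hi, hgi⟩ := hone_le
        exact hgi.trans (Finset.le_sup' g hi)
      · rw [hval]; exact Finset.le_sup' g hi
    · apply Finset.sup'_le
      intro i hi
      obtain ⟨y, hy⟩ := hrealize i hi
      calc g i = (∏ j, θ' j ^ A y j) / ∏ j, θ j ^ A y j := by rw [hfy y, hy]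
        _ ≤ _ := Finset.le_sup' (fun y => (∏ i, θ' i ^ A y i) / ∏ i, θ i ^ A y i) (Finset.mem_univ y)
  have hinf : Finset.univ.inf' Finset.univ_nonempty
      (fun y => (∏ i, θ' i ^ A y i) / ∏ i, θ i ^ A y i)
      = Sj.inf' hSj g := by
    apply le_antisymm
    · apply Finset.le_inf'
      intro i hi
      obtain ⟨y, hy⟩ := hrealize i hi
      calc _ ≤ (∏ j, θ' j ^ A y j) / ∏ j, θ j ^ A y j :=
            Finset.inf'_le (fun y => (∏ i, θ' i ^ A y i) / ∏ i, θ i ^ A y i) (Finset.mem_univ y)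
        _ = g i := by rw [hfy y, hy]
    · apply Finset.le_inf'
      intro y _
      rw [hfy y]
      rcases hcases y with h1 | ⟨i, hi, hval⟩
      · rw [h1]
        obtain ⟨i, hi, hgi⟩ := hle_one
        exact (Finset.inf'_le g hi).trans hgi
      · rw [hval]; exact Finset.inf'_le g hi
  rw [hsup, hinf]
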